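/- The Toda molecule equation holds: (d²/dt²) log D_n(t) = β_n(t) = D_{n+1}(t) D_{n-1}(t) / D_n(t)², for n ≥ 1. -/

import Mathlib

open MeasureTheory intervalIntegral Polynomial Finset

namespace Toda

noncomputable def Ip (w₀ : ℝ → ℝ) (p q : Polynomial ℝ) (t : ℝ) : ℝ :=
  ∫ x in (-1:ℝ)..1, p.eval x * q.eval x * w₀ x * Real.exp (-t*x)

variable {w₀ : ℝ → ℝ} {μ : ℕ → ℝ → ℝ} {P : ℕ → ℝ → Polynomial ℝ} {h : ℕ → ℝ → ℝ}

lemma intg (hw₀ : ContinuousOn w₀ (Set.Icc (-1) 1)) {f : ℝ → ℝ} (hf : Continuous f) (t : ℝ) :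
    IntervalIntegrable (fun x => f x * w₀ x * Real.exp (-t*x)) volume (-1) 1 := by
  apply ContinuousOn.intervalIntegrable
  have h1 : Set.uIcc (-1:ℝ) 1 = Set.Icc (-1) 1 := Set.uIcc_of_le (by norm_num)
  rw [h1]
  exact (hf.continuousOn.mul hw₀).mul (Continuous.continuousOn (by continuity))

lemma intg_pq (hw₀ : ContinuousOn w₀ (Set.Icc (-1) 1)) (p q : Polynomial ℝ) (t : ℝ) :
    IntervalIntegrable (fun x => p.eval x * q.eval x * w₀ x * Real.exp (-t*x)) volume (-1) 1 := by
  have := intg hw₀ (f := fun x => p.eval x * q.eval x)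
    ((p.continuous_aeval.mul q.continuous_aeval : Continuous _)) t
  simpa using this

lemma Ip_symm (w₀ : ℝ → ℝ) (p q : Polynomial ℝ) (t : ℝ) : Ip w₀ p q t = Ip w₀ q p t := by
  unfold Ip
  apply intervalIntegral.integral_congr
  intro x _; ring

lemma Ip_add_left (hw₀ : ContinuousOn w₀ (Set.Icc (-1) 1)) (p q r : Polynomial ℝ) (t : ℝ) :
    Ip w₀ (p + q) r t = Ip w₀ p r t + Ip w₀ q r t := by
  unfold Ip
  rw [← intervalIntegral.integral_add (intg_pq hw₀ p r t) (intg_pq hw₀ q r t)]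
  apply intervalIntegral.integral_congr
  intro x _
  simp [eval_add]; ring

lemma Ip_sub_left (hw₀ : ContinuousOn w₀ (Set.Icc (-1) 1)) (p q r : Polynomial ℝ) (t : ℝ) :
    Ip w₀ (p - q) r t = Ip w₀ p r t - Ip w₀ q r t := by
  unfold Ip
  rw [← intervalIntegral.integral_sub (intg_pq hw₀ p r t) (intg_pq hw₀ q r t)]
  apply intervalIntegral.integral_congr
  intro x _
  simp [eval_sub]; ring

lemma Ip_smul_left (c : ℝ) (p r : Polynomial ℝ) (t : ℝ) :
    Ip w₀ (c • p) r t = c * Ip w₀ p r t := by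
  unfold Ip
  rw [← intervalIntegral.integral_const_mul]
  apply intervalIntegral.integral_congr
  intro x _
  simp; ring

lemma Ip_zero_left (r : Polynomial ℝ) (t : ℝ) : Ip w₀ 0 r t = 0 := by
  unfold Ip; simp

lemma Ip_sum_left (hw₀ : ContinuousOn w₀ (Set.Icc (-1) 1)) {ι : Type*} (s : Finset ι)
    (f : ι → Polynomial ℝ) (r : Polynomial ℝ) (t : ℝ) :
    Ip w₀ (∑ i ∈ s, f i) r t = ∑ i ∈ s, Ip w₀ (f i) r t := by
  classical
  induction s using Finset.induction_on with
  | empty => simp [Ip_zero_left]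
  | insert _ _ hnotmem ih =>
    rw [Finset.sum_insert hnotmem, Ip_add_left hw₀, ih, Finset.sum_insert hnotmem]

section orth

variable (hw₀ : ContinuousOn w₀ (Set.Icc (-1) 1))
variable (hmonic : ∀ n t, (P n t).Monic) (hdeg : ∀ n t, (P n t).natDegree = n)
variable (horthIp : ∀ i j t, Ip w₀ (P i t) (P j t) t = if i = j then h i t else 0)

include hw₀ hmonic hdeg horthIp

lemma orth_aux : ∀ (d : ℕ) (q : Polynomial ℝ), q.natDegree ≤ d →
    ∀ m t, d < m → Ip w₀ q (P m t) t = 0 := by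
  intro d
  induction d with
  | zero =>
    intro q hq m t hm
    have hP0 : P 0 t = 1 := ((hmonic 0 t).natDegree_eq_zero).mp (hdeg 0 t)
    have hq0 : q = q.coeff 0 • P 0 t := by
      rw [hP0, smul_eq_C_mul, mul_one]
      exact (Polynomial.eq_C_of_natDegree_le_zero hq)
    rw [hq0, Ip_smul_left, horthIp 0 m t, if_neg (by omega)]
    ring
  | succ d ih =>
    intro q hq m t hm
    set q' := q - q.coeff (d+1) • P (d+1) t with hq'
    have hdq' : q'.natDegree ≤ d := by
      rw [Polynomial.natDegree_le_iff_coeff_eq_zero]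
      intro N hN
      rcases Nat.lt_or_ge (d+1) N with hc | hc
      · simp only [hq', Polynomial.coeff_sub, Polynomial.coeff_smul, smul_eq_mul]
        rw [Polynomial.coeff_eq_zero_of_natDegree_lt (p := P (d+1) t) (n := N)
            (by rw [hdeg]; exact hc),
          Polynomial.coeff_eq_zero_of_natDegree_lt (lt_of_le_of_lt hq hc)]
        ring
      · have hN' : N = d + 1 := by omega
        subst hN'
        simp only [hq', Polynomial.coeff_sub, Polynomial.coeff_smul, smul_eq_mul]
        have : (P (d+1) t).coeff (d+1) = 1 := by
          have := (hmonic (d+1) t).coeff_natDegree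
          rwa [hdeg] at this
        rw [this]; ring
    have hqeq : q = q' + q.coeff (d+1) • P (d+1) t := by rw [hq']; ring
    have key : Ip w₀ q (P m t) t
        = Ip w₀ q' (P m t) t + q.coeff (d+1) * Ip w₀ (P (d+1) t) (P m t) t := by
      have : Ip w₀ q' (P m t) t = Ip w₀ q (P m t) t
          - Ip w₀ (q.coeff (d+1) • P (d+1) t) (P m t) t := by
        rw [← Ip_sub_left hw₀]
      rw [Ip_smul_left] at this
      linarith
    rw [key, ih q' hdq' m t (by omega), horthIp (d+1) m t, if_neg (by omega)]
    ring

lemma orth_lt {q : Polynomial ℝ} {m : ℕ} (t : ℝ) (hq : q.natDegree < m) :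
    Ip w₀ q (P m t) t = 0 :=
  orth_aux hw₀ hmonic hdeg horthIp q.natDegree q le_rfl m t hq

lemma Ip_coeff {q : Polynomial ℝ} {m : ℕ} (t : ℝ) (hq : q.natDegree ≤ m) :
    Ip w₀ q (P m t) t = q.coeff m * h m t := by
  set q' := q - q.coeff m • P m t with hq'def
  have hcoeff : q'.coeff m = 0 := by
    simp only [hq'def, Polynomial.coeff_sub, Polynomial.coeff_smul, smul_eq_mul]
    have : (P m t).coeff m = 1 := by
      have := (hmonic m t).coeff_natDegree; rwa [hdeg] at this
    rw [this]; ring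
  have hdq' : q'.natDegree ≤ m := by
    apply Polynomial.natDegree_le_iff_coeff_eq_zero.mpr
    intro N hN
    simp only [hq'def, Polynomial.coeff_sub, Polynomial.coeff_smul, smul_eq_mul]
    rw [Polynomial.coeff_eq_zero_of_natDegree_lt (p := P m t) (n := N)
        (by rw [hdeg]; exact hN),
      Polynomial.coeff_eq_zero_of_natDegree_lt (lt_of_le_of_lt hq hN)]
    ring
  have hz : Ip w₀ q' (P m t) t = 0 := by
    rcases Nat.eq_zero_or_pos m with hm | hm
    · -- m = 0 : q' is a constant with coeff 0 = 0, so q' = 0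
      subst hm
      have : q' = 0 := by
        have := Polynomial.eq_C_of_natDegree_le_zero hdq'
        rw [this, hcoeff]; simp
      rw [this, Ip_zero_left]
    · apply orth_lt hw₀ hmonic hdeg horthIp
      have : q'.natDegree ≠ m := by
        intro hcontra
        by_cases hq0 : q' = 0
        · rw [hq0] at hcontra; simp at hcontra; omega
        · exact hq0 (Polynomial.leadingCoeff_eq_zero.mp (by rwa [Polynomial.leadingCoeff, hcontra]))
      omega
  have : Ip w₀ q' (P m t) t = Ip w₀ q (P m t) t - q.coeff m * Ip w₀ (P m t) (P m t) t := by
    rw [← Ip_smul_left, ← Ip_sub_left hw₀]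
  rw [horthIp, if_pos rfl] at this
  rw [hz] at this
  linarith

end orth

section orth2
variable (hw₀ : ContinuousOn w₀ (Set.Icc (-1) 1))
variable (hmonic : ∀ n t, (P n t).Monic) (hdeg : ∀ n t, (P n t).natDegree = n)
variable (horthIp : ∀ i j t, Ip w₀ (P i t) (P j t) t = if i = j then h i t else 0)
variable (hpos : ∀ n t, 0 < h n t)

include hw₀ hmonic hdeg horthIp hpos in
lemma eq_zero_of_orth {p : Polynomial ℝ} {m : ℕ} (t : ℝ) (hdp : p.natDegree ≤ m)
    (hz : ∀ i, i ≤ m → Ip w₀ p (P i t) t = 0) : p = 0 := by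
  by_contra hp0
  have hd : p.natDegree ≤ p.natDegree := le_rfl
  have := Ip_coeff hw₀ hmonic hdeg horthIp (q := p) (m := p.natDegree) t le_rfl
  rw [hz _ hdp] at this
  have hlc : p.coeff p.natDegree ≠ 0 := by
    rw [← Polynomial.leadingCoeff]
    exact Polynomial.leadingCoeff_ne_zero.mpr hp0
  exact mul_ne_zero hlc (ne_of_gt (hpos p.natDegree t)) this.symm

end orth2

section expand
variable (hw₀ : ContinuousOn w₀ (Set.Icc (-1) 1))
variable {μ : ℕ → ℝ → ℝ}
variable (hμ : ∀ i t, μ i t = ∫ x in (-1:ℝ)..1, x ^ i * w₀ x * Real.exp (-t * x))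

include hw₀ hμ in
lemma int_expand {n : ℕ} (t : ℝ) (c : ℝ) (s : ℕ) (q : Polynomial ℝ)
    (cq : Fin n → ℝ) (sq : Fin n → ℕ) (hq : ∀ x : ℝ, q.eval x = ∑ b, cq b * x ^ sq b) :
    (∫ x in (-1:ℝ)..1, c * x ^ s * q.eval x * w₀ x * Real.exp (-t*x))
      = ∑ b, c * cq b * μ (s + sq b) t := by
  have step1 : (∫ x in (-1:ℝ)..1, c * x ^ s * q.eval x * w₀ x * Real.exp (-t*x))
      = ∫ x in (-1:ℝ)..1, ∑ b : Fin n, (c * cq b * x ^ (s + sq b)) * w₀ x * Real.exp (-t*x) := by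
    apply intervalIntegral.integral_congr
    intro x _
    simp only []
    rw [hq x, Finset.mul_sum, Finset.sum_mul, Finset.sum_mul]
    apply Finset.sum_congr rfl
    intro b _
    rw [pow_add]; ring
  rw [step1, intervalIntegral.integral_finset_sum]
  · apply Finset.sum_congr rfl
    intro b _
    rw [hμ (s + sq b) t, ← intervalIntegral.integral_const_mul]
    apply intervalIntegral.integral_congr
    intro x _; ring
  · intro b _
    exact intg hw₀ (f := fun x => c * cq b * x ^ (s + sq b)) (by continuity) t

include hw₀ hμ in
lemma Ip_expand {n : ℕ} (t : ℝ) (p q : Polynomial ℝ)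
    (cp cq : Fin n → ℝ) (sp sq : Fin n → ℕ)
    (hp : ∀ x : ℝ, p.eval x = ∑ a, cp a * x ^ sp a)
    (hq : ∀ x : ℝ, q.eval x = ∑ b, cq b * x ^ sq b) :
    Ip w₀ p q t = ∑ a, ∑ b, cp a * cq b * μ (sp a + sq b) t := by
  unfold Ip
  have step1 : (∫ x in (-1:ℝ)..1, p.eval x * q.eval x * w₀ x * Real.exp (-t*x))
      = ∫ x in (-1:ℝ)..1, ∑ a : Fin n, (cp a * x ^ sp a * q.eval x) * w₀ x * Real.exp (-t*x) := by
    apply intervalIntegral.integral_congr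
    intro x _
    simp only []
    rw [hp x, Finset.sum_mul, Finset.sum_mul, Finset.sum_mul]
  rw [step1, intervalIntegral.integral_finset_sum]
  · exact Finset.sum_congr rfl fun a _ =>
      int_expand hw₀ hμ t (cp a) (sp a) q cq sq hq
  · intro a _
    exact intg hw₀
      (f := fun x => cp a * x ^ sp a * q.eval x)
      (by exact (continuous_const.mul (continuous_pow _)).mul q.continuous_aeval) t

end expand

section conv
variable (hw₀ : ContinuousOn w₀ (Set.Icc (-1) 1))
variable (hμ : ∀ i t, μ i t = ∫ x in (-1:ℝ)..1, x ^ i * w₀ x * Real.exp (-t * x))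
variable (hmonic : ∀ n t, (P n t).Monic) (hdeg : ∀ n t, (P n t).natDegree = n)

include hw₀ hμ in
lemma Ip_pow_expand {n : ℕ} (t : ℝ) (s : ℕ) (q : Polynomial ℝ)
    (cq : Fin n → ℝ) (sq : Fin n → ℕ) (hq : ∀ x : ℝ, q.eval x = ∑ b, cq b * x ^ sq b) :
    Ip w₀ ((Polynomial.X : Polynomial ℝ) ^ s) q t = ∑ b, cq b * μ (s + sq b) t := by
  unfold Ip
  have e1 : (∫ x in (-1:ℝ)..1,
        ((Polynomial.X : Polynomial ℝ)^s).eval x * q.eval x * w₀ x * Real.exp (-t*x))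
      = ∫ x in (-1:ℝ)..1, (1:ℝ) * x ^ s * q.eval x * w₀ x * Real.exp (-t*x) := by
    apply intervalIntegral.integral_congr
    intro x _; simp
  rw [e1, int_expand hw₀ hμ t 1 s q cq sq hq]
  simp

-- eval of P j as a sum over Fin n
omit hmonic in
include hdeg in
lemma evalP_sum {n : ℕ} (t : ℝ) (j : ℕ) (hj : j < n) (x : ℝ) :
    (P j t).eval x = ∑ b : Fin n, (P j t).coeff (b : ℕ) * x ^ (b : ℕ) := by
  rw [Polynomial.eval_eq_sum_range' (n := n) (by rw [hdeg]; exact hj) x]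
  rw [← Fin.sum_univ_eq_sum_range]

include hw₀ hμ hmonic hdeg in
lemma conv_right {n : ℕ} (t : ℝ) (r : Fin n → ℕ) :
    (Matrix.of fun i j : Fin n => μ (r i + (j:ℕ)) t).det
      = (Matrix.of fun i j : Fin n => Ip w₀ ((Polynomial.X : Polynomial ℝ) ^ (r i)) (P (j:ℕ) t) t).det := by
  classical
  set L : Matrix (Fin n) (Fin n) ℝ := Matrix.of fun a j : Fin n => (P (j:ℕ) t).coeff (a:ℕ) with hL
  have hdetL : L.det = 1 := by
    rw [Matrix.det_of_upperTriangular (M := L)]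
    · rw [Finset.prod_eq_one]
      intro i _
      show (P (i:ℕ) t).coeff (i:ℕ) = 1
      have := (hmonic (i:ℕ) t).coeff_natDegree
      rwa [hdeg] at this
    · intro i j hij
      show (P (j:ℕ) t).coeff (i:ℕ) = 0
      apply Polynomial.coeff_eq_zero_of_natDegree_lt
      rw [hdeg]; exact_mod_cast hij
  have hmul : (Matrix.of fun i j : Fin n => μ (r i + (j:ℕ)) t) * L
      = Matrix.of fun i j : Fin n => Ip w₀ ((Polynomial.X : Polynomial ℝ) ^ (r i)) (P (j:ℕ) t) t := by
    ext i j
    rw [Matrix.mul_apply]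
    show (∑ a : Fin n, μ (r i + (a:ℕ)) t * (P (j:ℕ) t).coeff (a:ℕ)) = _
    simp only [Matrix.of_apply]
    rw [Ip_pow_expand hw₀ hμ t (r i) (P (j:ℕ) t)
      (fun b : Fin n => (P (j:ℕ) t).coeff (b:ℕ)) (fun b => (b:ℕ))
      (evalP_sum hdeg t j j.isLt)]
    exact Finset.sum_congr rfl fun a _ => mul_comm _ _
  calc (Matrix.of fun i j : Fin n => μ (r i + (j:ℕ)) t).det
      = ((Matrix.of fun i j : Fin n => μ (r i + (j:ℕ)) t) * L).det := by
        rw [Matrix.det_mul, hdetL, mul_one]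
    _ = _ := by rw [hmul]

include hw₀ hμ in
lemma conv_both {n : ℕ} (t : ℝ) (r : Fin n → ℕ) (F : Fin n → Polynomial ℝ)
    (hF : ∀ (i : Fin n) (x : ℝ), (F i).eval x = ∑ a : Fin n, (F i).coeff (r a) * x ^ (r a))
    (htri : ∀ i a : Fin n, i < a → (F i).coeff (r a) = 0)
    (hdiag : ∀ i, (F i).coeff (r i) = 1) :
    (Matrix.of fun i j : Fin n => μ (r i + r j) t).det
      = (Matrix.of fun i j : Fin n => Ip w₀ (F i) (F j) t).det := by
  classical
  set L : Matrix (Fin n) (Fin n) ℝ := Matrix.of fun i a : Fin n => (F i).coeff (r a) with hL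
  have hdetL : L.det = 1 := by
    rw [Matrix.det_of_lowerTriangular L]
    · exact Finset.prod_eq_one fun i _ => hdiag i
    · intro i j hij
      exact htri i j (by exact_mod_cast hij)
  have hmul : L * (Matrix.of fun i j : Fin n => μ (r i + r j) t) * L.transpose
      = Matrix.of fun i j : Fin n => Ip w₀ (F i) (F j) t := by
    ext i j
    rw [Matrix.mul_apply]
    have inner : ∀ b : Fin n, (L * (Matrix.of fun i j : Fin n => μ (r i + r j) t)) i b
        = ∑ a : Fin n, (F i).coeff (r a) * μ (r a + r b) t := by
      intro b; rw [Matrix.mul_apply]; rfl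
    show (∑ b : Fin n, _ * L.transpose b j) = _
    simp only [Matrix.of_apply]
    rw [Ip_expand hw₀ hμ t (F i) (F j)
      (fun a => (F i).coeff (r a)) (fun b => (F j).coeff (r b)) r r (hF i) (hF j)]
    rw [Finset.sum_comm]
    apply Finset.sum_congr rfl
    intro b _
    rw [inner b, Finset.sum_mul]
    apply Finset.sum_congr rfl
    intro a _
    show (F i).coeff (r a) * μ (r a + r b) t * (F j).coeff (r b) = _
    ring
  calc (Matrix.of fun i j : Fin n => μ (r i + r j) t).det
      = (L * (Matrix.of fun i j : Fin n => μ (r i + r j) t) * L.transpose).det := by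
        rw [Matrix.det_mul, Matrix.det_mul, hdetL, Matrix.det_transpose, hdetL,
          one_mul, mul_one]
    _ = _ := by rw [hmul]

end conv

section dets
variable (hw₀ : ContinuousOn w₀ (Set.Icc (-1) 1))
variable (hμ : ∀ i t, μ i t = ∫ x in (-1:ℝ)..1, x ^ i * w₀ x * Real.exp (-t * x))
variable (hmonic : ∀ n t, (P n t).Monic) (hdeg : ∀ n t, (P n t).natDegree = n)
variable (horthIp : ∀ i j t, Ip w₀ (P i t) (P j t) t = if i = j then h i t else 0)
variable (hpos : ∀ n t, 0 < h n t)

/-- shifted row index map -/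
def r1 (m : ℕ) : Fin (m+1) → ℕ := Function.update (fun i : Fin (m+1) => (i:ℕ)) (Fin.last m) (m+1)

lemma r1_last (m : ℕ) : r1 m (Fin.last m) = m + 1 := by simp [r1]

lemma r1_ne (m : ℕ) {i : Fin (m+1)} (hi : i ≠ Fin.last m) : r1 m i = (i : ℕ) := by
  simp [r1, Function.update_of_ne hi]

include hw₀ hμ hmonic hdeg horthIp in
lemma detD (m : ℕ) (t : ℝ) :
    (Matrix.of fun i j : Fin m => μ ((i:ℕ) + (j:ℕ)) t).det = ∏ k ∈ range m, h k t := by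
  rw [conv_right hw₀ hμ hmonic hdeg t (fun i => (i : ℕ))]
  rw [Matrix.det_of_lowerTriangular]
  · rw [← Fin.prod_univ_eq_prod_range]
    apply Finset.prod_congr rfl
    intro i _
    show Ip w₀ ((Polynomial.X : Polynomial ℝ) ^ (i:ℕ)) (P (i:ℕ) t) t = h (i:ℕ) t
    rw [Ip_coeff hw₀ hmonic hdeg horthIp t (by simp [Polynomial.natDegree_X_pow])]
    simp
  · intro i j hij
    show Ip w₀ ((Polynomial.X : Polynomial ℝ) ^ (i:ℕ)) (P (j:ℕ) t) t = 0
    apply orth_lt hw₀ hmonic hdeg horthIp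
    rw [Polynomial.natDegree_X_pow]
    exact_mod_cast hij

include hw₀ hμ hmonic hdeg horthIp in
lemma detDelta (m : ℕ) (t : ℝ) :
    (Matrix.of fun i j : Fin (m+1) => μ (r1 m i + (j:ℕ)) t).det
      = (∏ k ∈ range m, h k t) * Ip w₀ ((Polynomial.X : Polynomial ℝ) ^ (m+1)) (P m t) t := by
  rw [conv_right hw₀ hμ hmonic hdeg t (r1 m)]
  rw [Matrix.det_of_lowerTriangular]
  · rw [Fin.prod_univ_castSucc]
    congr 1
    · rw [← Fin.prod_univ_eq_prod_range]
      apply Finset.prod_congr rfl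
      intro i _
      have hne : (Fin.castSucc i) ≠ Fin.last m := Fin.ne_of_lt (Fin.castSucc_lt_last i)
      show Ip w₀ ((Polynomial.X : Polynomial ℝ) ^ (r1 m (Fin.castSucc i))) (P ((Fin.castSucc i : Fin (m+1)):ℕ) t) t = h (i:ℕ) t
      rw [r1_ne m hne]
      simp only [Fin.coe_castSucc]
      rw [Ip_coeff hw₀ hmonic hdeg horthIp t (by simp [Polynomial.natDegree_X_pow])]
      simp
    · show Ip w₀ ((Polynomial.X : Polynomial ℝ) ^ (r1 m (Fin.last m))) (P ((Fin.last m : Fin (m+1)):ℕ) t) t = _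
      rw [r1_last]
      simp [Fin.val_last]
  · intro i j hij
    show Ip w₀ ((Polynomial.X : Polynomial ℝ) ^ (r1 m i)) (P ((j : Fin (m+1)):ℕ) t) t = 0
    have hne : i ≠ Fin.last m := by
      intro hcontra
      subst hcontra
      exact absurd hij (not_lt.mpr (Fin.le_last j))
    apply orth_lt hw₀ hmonic hdeg horthIp
    rw [Polynomial.natDegree_X_pow, r1_ne m hne]
    exact_mod_cast hij

include hw₀ hμ hmonic hdeg horthIp hpos in
lemma detK (m : ℕ) (t : ℝ) :
    (Matrix.of fun i j : Fin (m+1) => μ (r1 m i + r1 m j) t).det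
      = (∏ k ∈ range m, h k t)
        * (h (m+1) t + (Ip w₀ ((Polynomial.X : Polynomial ℝ) ^ (m+1)) (P m t) t)^2 / h m t) := by
  classical
  set A : ℝ := Ip w₀ ((Polynomial.X : Polynomial ℝ) ^ (m+1)) (P m t) t with hA
  set G : Polynomial ℝ := (Polynomial.X : Polynomial ℝ) ^ (m+1)
      - ∑ k ∈ range m, ((Ip w₀ ((Polynomial.X : Polynomial ℝ) ^ (m+1)) (P k t) t) / h k t) • P k t
    with hG
  have hsumcoeff : ∀ N : ℕ, m ≤ N →
      (∑ k ∈ range m, ((Ip w₀ ((Polynomial.X : Polynomial ℝ) ^ (m+1)) (P k t) t) / h k t) • P k t).coeff N = 0 := by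
    intro N hN
    rw [Polynomial.finset_sum_coeff]
    apply Finset.sum_eq_zero
    intro k hk
    rw [Polynomial.coeff_smul, smul_eq_mul,
      Polynomial.coeff_eq_zero_of_natDegree_lt (by rw [hdeg]; exact lt_of_lt_of_le (mem_range.mp hk) hN)]
    ring
  have hGtop : G.coeff (m+1) = 1 := by
    rw [hG, Polynomial.coeff_sub, Polynomial.coeff_X_pow, hsumcoeff (m+1) (by omega)]
    simp
  have hGm : G.coeff m = 0 := by
    rw [hG, Polynomial.coeff_sub, Polynomial.coeff_X_pow, hsumcoeff m le_rfl]
    simp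
  have hGhigh : ∀ N, m + 1 < N → G.coeff N = 0 := by
    intro N hN
    rw [hG, Polynomial.coeff_sub, Polynomial.coeff_X_pow, hsumcoeff N (by omega)]
    simp [Nat.ne_of_gt hN]
  have hGdeg : G.natDegree ≤ m + 1 :=
    Polynomial.natDegree_le_iff_coeff_eq_zero.mpr fun N hN => hGhigh N hN
  -- orthogonality of G to P k for k < m
  have hGP : ∀ k : ℕ, k < m → Ip w₀ G (P k t) t = 0 := by
    intro k hk
    rw [hG, Ip_sub_left hw₀, Ip_sum_left hw₀]
    have : ∀ k' ∈ range m, Ip w₀ (((Ip w₀ ((Polynomial.X : Polynomial ℝ) ^ (m+1)) (P k' t) t) / h k' t) • P k' t) (P k t) t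
        = if k' = k then Ip w₀ ((Polynomial.X : Polynomial ℝ) ^ (m+1)) (P k t) t else 0 := by
      intro k' _
      rw [Ip_smul_left, horthIp]
      by_cases hkk : k' = k
      · subst hkk
        rw [if_pos rfl, if_pos rfl, div_mul_cancel₀ _ (ne_of_gt (hpos k' t))]
      · rw [if_neg hkk, if_neg hkk]; ring
    rw [Finset.sum_congr rfl this, Finset.sum_ite_eq' (range m) k
      (fun _ => Ip w₀ ((Polynomial.X : Polynomial ℝ) ^ (m+1)) (P k t) t)]
    rw [if_pos (mem_range.mpr hk)]
    ring
  have hGPm : Ip w₀ G (P m t) t = A := by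
    rw [hG, Ip_sub_left hw₀, Ip_sum_left hw₀, ← hA]
    have : ∀ k' ∈ range m, Ip w₀ (((Ip w₀ ((Polynomial.X : Polynomial ℝ) ^ (m+1)) (P k' t) t) / h k' t) • P k' t) (P m t) t = 0 := by
      intro k' hk'
      rw [Ip_smul_left, horthIp, if_neg (by have := mem_range.mp hk'; omega)]
      ring
    rw [Finset.sum_congr rfl this]
    simp
  -- decomposition of G
  have hGdecomp : G = P (m+1) t + (A / h m t) • P m t := by
    have hp0 : G - P (m+1) t - (A / h m t) • P m t = 0 := by
      apply eq_zero_of_orth hw₀ hmonic hdeg horthIp hpos (m := m) t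
      · apply Polynomial.natDegree_le_iff_coeff_eq_zero.mpr
        intro N hN
        simp only [Polynomial.coeff_sub, Polynomial.coeff_smul, smul_eq_mul]
        rcases Nat.lt_or_ge (m+1) N with hc | hc
        · rw [hGhigh N hc,
            Polynomial.coeff_eq_zero_of_natDegree_lt (p := P (m+1) t) (by rw [hdeg]; omega),
            Polynomial.coeff_eq_zero_of_natDegree_lt (p := P m t) (by rw [hdeg]; omega)]
          ring
        · have hN1 : N = m + 1 := by omega
          subst hN1
          rw [hGtop,
            Polynomial.coeff_eq_zero_of_natDegree_lt (p := P m t) (by rw [hdeg]; omega)]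
          have : (P (m+1) t).coeff (m+1) = 1 := by
            have := (hmonic (m+1) t).coeff_natDegree; rwa [hdeg] at this
          rw [this]; ring
      · intro i hi
        have e1 : Ip w₀ (G - P (m+1) t - (A / h m t) • P m t) (P i t) t
            = Ip w₀ G (P i t) t - Ip w₀ (P (m+1) t) (P i t) t - (A / h m t) * Ip w₀ (P m t) (P i t) t := by
          rw [Ip_sub_left hw₀, Ip_sub_left hw₀, Ip_smul_left]
        rw [e1, horthIp, horthIp, if_neg (by omega)]
        rcases Nat.lt_or_ge i m with hc | hc
        · rw [hGP i hc, if_neg (by omega)]; ring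
        · have : i = m := by omega
          subst this
          rw [hGPm, if_pos rfl, div_mul_cancel₀ _ (ne_of_gt (hpos i t))]; ring
    rw [sub_sub] at hp0
    exact sub_eq_zero.mp hp0
  have h1 : Ip w₀ G (P (m+1) t) t = h (m+1) t := by
    rw [hGdecomp, Ip_add_left hw₀, Ip_smul_left, horthIp, horthIp, if_pos rfl,
      if_neg (by omega)]
    ring
  have hIpGG : Ip w₀ G G t = h (m+1) t + A^2 / h m t := by
    nth_rewrite 1 [hGdecomp]
    rw [Ip_add_left hw₀, Ip_smul_left, Ip_symm w₀ (P (m+1) t) G, Ip_symm w₀ (P m t) G,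
      h1, hGPm]
    ring
  -- the companion family
  set F : Fin (m+1) → Polynomial ℝ :=
    fun i => if i = Fin.last m then G else P (i:ℕ) t with hF
  have hval_lt : ∀ i : Fin (m+1), i ≠ Fin.last m → (i:ℕ) < m := by
    intro i hi
    have := Fin.is_lt i
    rcases Nat.lt_or_ge (i:ℕ) m with hc | hc
    · exact hc
    · exfalso; apply hi; apply Fin.ext; simp [Fin.val_last]; omega
  have hsum_r1 : ∀ q : Polynomial ℝ, q.natDegree ≤ m+1 → q.coeff m = 0 →
      ∀ x : ℝ, q.eval x = ∑ a : Fin (m+1), q.coeff (r1 m a) * x ^ (r1 m a) := by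
    intro q hq hqm x
    rw [Fin.sum_univ_castSucc]
    have e1 : ∀ a : Fin m, r1 m (Fin.castSucc a) = (a:ℕ) := by
      intro a
      rw [r1_ne m (Fin.ne_of_lt (Fin.castSucc_lt_last a))]
      simp
    have e2 : (∑ a : Fin m, q.coeff (r1 m (Fin.castSucc a)) * x ^ (r1 m (Fin.castSucc a)))
        = ∑ a ∈ range m, q.coeff a * x ^ a := by
      rw [← Fin.sum_univ_eq_sum_range]
      exact Finset.sum_congr rfl fun a _ => by rw [e1 a]
    rw [e2, r1_last]
    rw [Polynomial.eval_eq_sum_range' (n := m+2) (by omega) x]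
    rw [Finset.sum_range_succ, Finset.sum_range_succ, hqm]
    simp [Fin.val_last]
  have hFeval : ∀ (i : Fin (m+1)) (x : ℝ),
      (F i).eval x = ∑ a : Fin (m+1), (F i).coeff (r1 m a) * x ^ (r1 m a) := by
    intro i x
    by_cases hi : i = Fin.last m
    · rw [hF]; simp only [if_pos hi]
      exact hsum_r1 G hGdeg hGm x
    · rw [hF]; simp only [if_neg hi]
      apply hsum_r1
      · rw [hdeg]; omega
      · exact Polynomial.coeff_eq_zero_of_natDegree_lt (by rw [hdeg]; exact hval_lt i hi)
  have hFtri : ∀ i a : Fin (m+1), i < a → (F i).coeff (r1 m a) = 0 := by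
    intro i a hia
    have hine : i ≠ Fin.last m := Fin.ne_of_lt (lt_of_lt_of_le hia (Fin.le_last a))
    rw [hF]; simp only [if_neg hine]
    by_cases ha : a = Fin.last m
    · subst ha
      rw [r1_last]
      exact Polynomial.coeff_eq_zero_of_natDegree_lt (by rw [hdeg]; omega)
    · rw [r1_ne m ha]
      exact Polynomial.coeff_eq_zero_of_natDegree_lt (by rw [hdeg]; exact_mod_cast hia)
  have hFdiag : ∀ i : Fin (m+1), (F i).coeff (r1 m i) = 1 := by
    intro i
    by_cases hi : i = Fin.last m
    · subst hi
      rw [hF]; simp only [if_pos rfl]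
      rw [r1_last]; exact hGtop
    · rw [hF]; simp only [if_neg hi, r1_ne m hi]
      have := (hmonic (i:ℕ) t).coeff_natDegree
      rwa [hdeg] at this
  rw [conv_both hw₀ hμ t (r1 m) F hFeval hFtri hFdiag]
  have hdiagmat : (Matrix.of fun i j : Fin (m+1) => Ip w₀ (F i) (F j) t)
      = Matrix.diagonal (fun i : Fin (m+1) =>
          if i = Fin.last m then h (m+1) t + A^2 / h m t else h (i:ℕ) t) := by
    ext i j
    by_cases hij : i = j
    · subst hij
      rw [Matrix.diagonal_apply_eq]
      by_cases hi : i = Fin.last m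
      · subst hi
        simp only [Matrix.of_apply, hF, if_pos rfl]
        exact hIpGG
      · simp only [Matrix.of_apply, hF, if_neg hi]
        rw [horthIp, if_pos rfl]
    · rw [Matrix.diagonal_apply_ne _ hij]
      by_cases hi : i = Fin.last m
      · subst hi
        have hj : j ≠ Fin.last m := fun hc => hij hc.symm
        simp only [Matrix.of_apply, hF, if_pos rfl, if_neg hj]
        exact hGP (j:ℕ) (hval_lt j hj)
      · by_cases hj : j = Fin.last m
        · subst hj
          simp only [Matrix.of_apply, hF, if_neg hi, if_pos rfl]
          rw [Ip_symm]
          exact hGP (i:ℕ) (hval_lt i hi)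
        · simp only [Matrix.of_apply, hF, if_neg hi, if_neg hj]
          rw [horthIp, if_neg (by
            intro hc
            exact hij (Fin.ext hc))]
  rw [hdiagmat, Matrix.det_diagonal, Fin.prod_univ_castSucc]
  rw [if_pos rfl]
  congr 1
  rw [← Fin.prod_univ_eq_prod_range]
  apply Finset.prod_congr rfl
  intro a _
  rw [if_neg (Fin.ne_of_lt (Fin.castSucc_lt_last a))]
  simp

end dets

section derivs
variable (hw₀ : ContinuousOn w₀ (Set.Icc (-1) 1))
variable (hμ : ∀ i t, μ i t = ∫ x in (-1:ℝ)..1, x ^ i * w₀ x * Real.exp (-t * x))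

include hw₀ hμ in
lemma hasDerivAt_mu (k : ℕ) (t : ℝ) : HasDerivAt (μ k) (- μ (k+1) t) t := by
  obtain ⟨C, hC⟩ := isCompact_Icc.exists_bound_of_continuousOn hw₀
  have huIoc : Set.uIoc (-1:ℝ) 1 = Set.Ioc (-1) 1 := Set.uIoc_of_le (by norm_num)
  have hsub : Set.Ioc (-1:ℝ) 1 ⊆ Set.Icc (-1) 1 := Set.Ioc_subset_Icc_self
  set F : ℝ → ℝ → ℝ := fun s x => x ^ k * w₀ x * Real.exp (-s * x) with hF
  set F' : ℝ → ℝ → ℝ := fun s x => x ^ k * w₀ x * (-x * Real.exp (-s * x)) with hF'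
  have contw : ContinuousOn w₀ (Set.Ioc (-1:ℝ) 1) := hw₀.mono hsub
  have key := intervalIntegral.hasDerivAt_integral_of_dominated_loc_of_deriv_le
    (F := F) (F' := F') (x₀ := t) (a := (-1:ℝ)) (b := 1) (μ := volume)
    (bound := fun _ => (|C|+1) * Real.exp (|t| + 1))
    (s := Metric.ball t 1) (Metric.ball_mem_nhds t one_pos)
    (by
      filter_upwards with s
      rw [huIoc]
      apply ContinuousOn.aestronglyMeasurable _ measurableSet_Ioc
      exact ((continuous_pow k).continuousOn.mul contw).mul
        (Continuous.continuousOn (by continuity)))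
    (by
      have := intg (w₀ := w₀) hw₀ (f := fun x : ℝ => x ^ k) (continuous_pow k) t
      simpa [hF] using this)
    (by
      rw [huIoc]
      apply ContinuousOn.aestronglyMeasurable _ measurableSet_Ioc
      exact ((continuous_pow k).continuousOn.mul contw).mul
        (Continuous.continuousOn (by continuity)))
    (by
      apply ae_of_all
      intro x hx s hs
      rw [huIoc] at hx
      have hx1 : |x| ≤ 1 := by
        rw [abs_le]; constructor
        · linarith [hx.1]
        · exact hx.2
      have hC' : |w₀ x| ≤ |C| := by
        calc |w₀ x| = ‖w₀ x‖ := rfl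
        _ ≤ C := hC x (hsub hx)
        _ ≤ |C| := le_abs_self C
      have hs' : |s| ≤ |t| + 1 := by
        rw [Metric.mem_ball, Real.dist_eq] at hs
        have := abs_sub_abs_le_abs_sub s t
        linarith
      have hexp : Real.exp (-s * x) ≤ Real.exp (|t| + 1) := by
        apply Real.exp_le_exp.mpr
        calc -s * x ≤ |(-s) * x| := le_abs_self _
        _ = |s| * |x| := by rw [abs_mul, abs_neg]
        _ ≤ (|t| + 1) * 1 := by
            apply mul_le_mul hs' hx1 (abs_nonneg x) (by positivity)
        _ = |t| + 1 := mul_one _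
      show ‖x ^ k * w₀ x * (-x * Real.exp (-s*x))‖ ≤ (|C|+1) * Real.exp (|t| + 1)
      rw [Real.norm_eq_abs, abs_mul, abs_mul, abs_mul, abs_neg, abs_pow]
      have h1 : |x| ^ k ≤ 1 := pow_le_one₀ (abs_nonneg x) hx1
      have h2 : |Real.exp (-s*x)| = Real.exp (-s*x) := abs_of_pos (Real.exp_pos _)
      rw [h2]
      calc |x| ^ k * |w₀ x| * (|x| * Real.exp (-s * x))
          ≤ 1 * |C| * (1 * Real.exp (|t| + 1)) := by
            apply mul_le_mul
            · apply mul_le_mul h1 hC' (abs_nonneg _) (by norm_num)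
            · apply mul_le_mul hx1 hexp (Real.exp_pos _).le (by norm_num)
            · positivity
            · positivity
        _ ≤ (|C|+1) * Real.exp (|t| + 1) := by
            rw [one_mul, one_mul]
            have := Real.exp_pos (|t| + 1)
            nlinarith)
    (intervalIntegrable_const)
    (by
      apply ae_of_all
      intro x _ s _
      show HasDerivAt (fun s => x ^ k * w₀ x * Real.exp (-s * x)) (x ^ k * w₀ x * (-x * Real.exp (-s * x))) s
      have h1 : HasDerivAt (fun s : ℝ => -s * x) (-x) s := by
        simpa using ((hasDerivAt_id s).neg.mul_const x)
      have := (h1.exp).const_mul (x ^ k * w₀ x)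
      exact this.congr_deriv (by ring))
  have h2 : HasDerivAt (fun s => ∫ x in (-1:ℝ)..1, F s x) (∫ x in (-1:ℝ)..1, F' t x) t :=
    key.2
  have h3 : (fun s => ∫ x in (-1:ℝ)..1, F s x) = μ k := by
    funext s
    rw [hμ k s]
  have h4 : (∫ x in (-1:ℝ)..1, F' t x) = - μ (k+1) t := by
    rw [hμ (k+1) t, ← intervalIntegral.integral_neg]
    apply intervalIntegral.integral_congr
    intro x _
    show x ^ k * w₀ x * (-x * Real.exp (-t*x)) = -(x ^ (k+1) * w₀ x * Real.exp (-t * x))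
    rw [pow_succ]; ring
  rw [h3, h4] at h2
  exact h2

end derivs

section detderiv
variable (hw₀ : ContinuousOn w₀ (Set.Icc (-1) 1))
variable (hμ : ∀ i t, μ i t = ∫ x in (-1:ℝ)..1, x ^ i * w₀ x * Real.exp (-t * x))

include hw₀ hμ in
lemma hasDerivAt_hankel {n : ℕ} (r c : Fin n → ℕ) (t : ℝ) :
    HasDerivAt (fun s => (Matrix.of fun i j : Fin n => μ (r i + c j) s).det)
      (- ∑ p : Fin n,
        (Matrix.of fun i j : Fin n => μ (r i + Function.update c p (c p + 1) j) t).det) t := by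
  classical
  have hfun : (fun s => (Matrix.of fun i j : Fin n => μ (r i + c j) s).det)
      = fun s => ∑ σ : Equiv.Perm (Fin n),
          ((Equiv.Perm.sign σ : ℤ) : ℝ) * ∏ i, μ (r (σ i) + c i) s := by
    funext s
    rw [Matrix.det_apply']
    rfl
  rw [hfun]
  have hterm : ∀ σ : Equiv.Perm (Fin n),
      HasDerivAt (fun s => ((Equiv.Perm.sign σ : ℤ) : ℝ) * ∏ i, μ (r (σ i) + c i) s)
        (((Equiv.Perm.sign σ : ℤ) : ℝ) *
          ∑ p : Fin n, (∏ j ∈ Finset.univ.erase p, μ (r (σ j) + c j) t)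
            * (- μ (r (σ p) + c p + 1) t)) t := by
    intro σ
    have hprod : HasDerivAt (fun s => ∏ i, μ (r (σ i) + c i) s)
        (∑ p : Fin n, (∏ j ∈ Finset.univ.erase p, μ (r (σ j) + c j) t)
            * (- μ (r (σ p) + c p + 1) t)) t := by
      have := HasDerivAt.fun_finsetProd (u := Finset.univ)
        (f := fun i s => μ (r (σ i) + c i) s)
        (f' := fun i => - μ (r (σ i) + c i + 1) t) (x := t)
        (fun i _ => hasDerivAt_mu hw₀ hμ (r (σ i) + c i) t)
      simpa [smul_eq_mul] using this
    exact hprod.const_mul _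
  have := HasDerivAt.fun_sum (u := Finset.univ) (x := t)
    (A := fun σ s => ((Equiv.Perm.sign σ : ℤ) : ℝ) * ∏ i, μ (r (σ i) + c i) s)
    (A' := fun σ => ((Equiv.Perm.sign σ : ℤ) : ℝ) *
          ∑ p : Fin n, (∏ j ∈ Finset.univ.erase p, μ (r (σ j) + c j) t)
            * (- μ (r (σ p) + c p + 1) t))
    (fun σ _ => hterm σ)
  refine this.congr_deriv (Eq.symm ?_)
  have hdet : ∀ p : Fin n,
      (Matrix.of fun i j : Fin n => μ (r i + Function.update c p (c p + 1) j) t).det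
      = ∑ σ : Equiv.Perm (Fin n), ((Equiv.Perm.sign σ : ℤ) : ℝ)
          * ∏ i, μ (r (σ i) + Function.update c p (c p + 1) i) t := by
    intro p
    rw [Matrix.det_apply']
    rfl
  have key : ∀ (p : Fin n) (σ : Equiv.Perm (Fin n)),
      ((Equiv.Perm.sign σ : ℤ) : ℝ) * ∏ i, μ (r (σ i) + Function.update c p (c p + 1) i) t
      = - (((Equiv.Perm.sign σ : ℤ) : ℝ) * ((∏ j ∈ Finset.univ.erase p, μ (r (σ j) + c j) t)
          * (- μ (r (σ p) + c p + 1) t))) := by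
    intro p σ
    rw [← Finset.mul_prod_erase Finset.univ _ (Finset.mem_univ p), Function.update_self]
    have e2 : ∏ j ∈ Finset.univ.erase p, μ (r (σ j) + Function.update c p (c p + 1) j) t
        = ∏ j ∈ Finset.univ.erase p, μ (r (σ j) + c j) t :=
      Finset.prod_congr rfl fun j hj => by
        rw [Function.update_of_ne (Finset.ne_of_mem_erase hj)]
    rw [e2, ← add_assoc]
    ring
  simp only [hdet, Finset.mul_sum]
  rw [Finset.sum_comm]
  rw [← Finset.sum_neg_distrib]
  apply Finset.sum_congr rfl
  intro σ _
  rw [← Finset.sum_neg_distrib]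
  apply Finset.sum_congr rfl
  intro p _
  rw [key p σ, neg_neg]

end detderiv

end Toda
/-- the Toda molecule equation
`(d²/dt²) log D_n(t) = β_n(t) = D_{n+1}(t) D_{n-1}(t) / D_n(t)²` for `n ≥ 1`. -/
theorem toda_molecule (w₀ : ℝ → ℝ) (hw₀ : ContinuousOn w₀ (Set.Icc (-1) 1))
    (hw₀pos : ∀ x ∈ Set.Icc (-1:ℝ) 1, 0 < w₀ x)
    (μ : ℕ → ℝ → ℝ)
    (hμ : ∀ i t, μ i t = ∫ x in (-1:ℝ)..1, x ^ i * w₀ x * Real.exp (-t * x))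
    (D : ℕ → ℝ → ℝ)
    (hD : ∀ n t, D n t = (Matrix.of fun i j : Fin n => μ (i + j) t).det)
    (P : ℕ → ℝ → Polynomial ℝ)
    (hmonic : ∀ n t, (P n t).Monic) (hdeg : ∀ n t, (P n t).natDegree = n)
    (h : ℕ → ℝ → ℝ)
    (horth : ∀ i j t, (∫ x in (-1:ℝ)..1,
        (P i t).eval x * (P j t).eval x * w₀ x * Real.exp (-t * x)) =
      if i = j then h i t else 0)
    (hpos : ∀ n t, 0 < h n t)
    (b : ℕ → ℝ → ℝ)
    (hb : ∀ (n : ℕ) (t : ℝ), 1 ≤ n → b n t = h n t / h (n - 1) t) :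
    ∀ (n : ℕ) (t : ℝ), 1 ≤ n →
      deriv (deriv (fun s => Real.log (D n s))) t = b n t ∧
      b n t = D (n + 1) t * D (n - 1) t / (D n t) ^ 2 := by
  classical
  intro n t hn
  obtain ⟨m, rfl⟩ : ∃ m, n = m + 1 := ⟨n - 1, by omega⟩
  have horthIp : ∀ i j t, Toda.Ip w₀ (P i t) (P j t) t = if i = j then h i t else 0 := by
    intro i j t; exact horth i j t
  -- determinant value lemmas
  have hDval : ∀ (N : ℕ) (s : ℝ), D N s = ∏ k ∈ Finset.range N, h k s := by
    intro N s
    rw [hD N s]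
    exact Toda.detD hw₀ hμ hmonic hdeg horthIp N s
  have hDpos : ∀ (N : ℕ) (s : ℝ), 0 < D N s := by
    intro N s
    rw [hDval]
    exact Finset.prod_pos fun k _ => hpos k s
  -- the shifted determinant functions
  set Δf : ℝ → ℝ :=
    fun s => (Matrix.of fun i j : Fin (m+1) => μ (Toda.r1 m i + (j:ℕ)) s).det with hΔf
  set Kf : ℝ → ℝ :=
    fun s => (Matrix.of fun i j : Fin (m+1) => μ (Toda.r1 m i + Toda.r1 m j) s).det with hKf
  have hΔval : ∀ s, Δf s = (∏ k ∈ Finset.range m, h k s)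
      * Toda.Ip w₀ ((Polynomial.X : Polynomial ℝ) ^ (m+1)) (P m s) s := by
    intro s
    exact Toda.detDelta hw₀ hμ hmonic hdeg horthIp m s
  have hKval : ∀ s, Kf s = (∏ k ∈ Finset.range m, h k s)
      * (h (m+1) s + (Toda.Ip w₀ ((Polynomial.X : Polynomial ℝ) ^ (m+1)) (P m s) s)^2 / h m s) := by
    intro s
    exact Toda.detK hw₀ hμ hmonic hdeg horthIp hpos m s
  -- the sum over column updates collapses to a single determinant
  have hval_lt : ∀ p : Fin (m+1), p ≠ Fin.last m → (p:ℕ) < m := by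
    intro p hp
    have := Fin.is_lt p
    rcases Nat.lt_or_ge (p:ℕ) m with hc | hc
    · exact hc
    · exfalso; apply hp; apply Fin.ext; simp [Fin.val_last]; omega
  have hsum_update : ∀ (r : Fin (m+1) → ℕ) (s : ℝ),
      (∑ p : Fin (m+1), (Matrix.of fun i j : Fin (m+1) =>
          μ (r i + Function.update (fun i : Fin (m+1) => (i:ℕ)) p
              ((fun i : Fin (m+1) => (i:ℕ)) p + 1) j) s).det)
      = (Matrix.of fun i j : Fin (m+1) => μ (r i + Toda.r1 m j) s).det := by
    intro r s
    have hupd_last : Function.update (fun i : Fin (m+1) => (i:ℕ)) (Fin.last m)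
        ((fun i : Fin (m+1) => (i:ℕ)) (Fin.last m) + 1) = Toda.r1 m := by
      funext j
      unfold Toda.r1
      by_cases hj : j = Fin.last m
      · subst hj; simp [Fin.val_last]
      · rw [Function.update_of_ne hj, Function.update_of_ne hj]
    rw [Finset.sum_eq_single (Fin.last m)]
    · rw [hupd_last]
    · intro p _ hp
      have hplt : (p:ℕ) < m := hval_lt p hp
      set q : Fin (m+1) := ⟨(p:ℕ)+1, by omega⟩ with hq
      have hpq : p ≠ q := by
        intro hcontra
        have := congrArg Fin.val hcontra
        simp [hq] at this
      apply Matrix.det_zero_of_column_eq hpq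
      intro k
      simp only [Matrix.of_apply]
      congr 1
      have h1 : Function.update (fun i : Fin (m+1) => (i:ℕ)) p
          ((fun i : Fin (m+1) => (i:ℕ)) p + 1) p = (p:ℕ) + 1 := Function.update_self _ _ _
      have h2 : Function.update (fun i : Fin (m+1) => (i:ℕ)) p
          ((fun i : Fin (m+1) => (i:ℕ)) p + 1) q = (q:ℕ) :=
        Function.update_of_ne (fun hcontra => hpq hcontra.symm) _ _
      rw [h1, h2]
    · intro hcontra
      exact absurd (Finset.mem_univ (Fin.last m)) hcontra
  -- first derivative
  have hd1 : ∀ s, HasDerivAt (D (m+1)) (-Δf s) s := by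
    intro s
    have hDfun : D (m+1) = fun u => (Matrix.of fun i j : Fin (m+1) => μ ((i:ℕ) + (j:ℕ)) u).det :=
      funext fun u => hD (m+1) u
    rw [hDfun]
    have H := Toda.hasDerivAt_hankel hw₀ hμ (fun i : Fin (m+1) => (i:ℕ)) (fun i : Fin (m+1) => (i:ℕ)) s
    rw [hsum_update (fun i : Fin (m+1) => (i:ℕ)) s] at H
    have hswap : (Matrix.of fun i j : Fin (m+1) => μ ((i:ℕ) + Toda.r1 m j) s).det = Δf s := by
      rw [hΔf]
      simp only []
      rw [← Matrix.det_transpose (Matrix.of fun i j : Fin (m+1) => μ (Toda.r1 m i + (j:ℕ)) s)]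
      congr 1
      ext i j
      simp [Matrix.transpose_apply, Nat.add_comm]
    rw [hswap] at H
    exact H
  have hd2 : ∀ s, HasDerivAt Δf (-Kf s) s := by
    intro s
    have H := Toda.hasDerivAt_hankel hw₀ hμ (Toda.r1 m) (fun i : Fin (m+1) => (i:ℕ)) s
    rw [hsum_update (Toda.r1 m) s] at H
    exact H
  -- log derivative
  have hlog : ∀ s, HasDerivAt (fun u => Real.log (D (m+1) u)) (-Δf s / D (m+1) s) s := by
    intro s
    exact HasDerivAt.log (hd1 s) (ne_of_gt (hDpos (m+1) s))
  have hderivlog : deriv (fun u => Real.log (D (m+1) u)) = fun s => -Δf s / D (m+1) s :=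
    funext fun s => (hlog s).deriv
  have hdd : HasDerivAt (fun s => -Δf s / D (m+1) s)
      ((Kf t * D (m+1) t - (-Δf t) * (-Δf t)) / (D (m+1) t)^2) t := by
    have h1 : HasDerivAt (fun s => -Δf s) (Kf t) t := by
      have := (hd2 t).neg
      rw [neg_neg] at this
      exact this
    exact h1.div (hd1 t) (ne_of_gt (hDpos (m+1) t))
  have hsecond : deriv (deriv (fun s => Real.log (D (m+1) s))) t
      = (Kf t * D (m+1) t - Δf t * Δf t) / (D (m+1) t)^2 := by
    rw [hderivlog]
    have := hdd.deriv
    rw [this]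
    ring_nf
  -- numeric values
  set A : ℝ := Toda.Ip w₀ ((Polynomial.X : Polynomial ℝ) ^ (m+1)) (P m t) t with hA
  set Q : ℝ := ∏ k ∈ Finset.range m, h k t with hQ
  have hQpos : 0 < Q := Finset.prod_pos fun k _ => hpos k t
  have hDm1 : D (m+1) t = Q * h m t := by
    rw [hDval (m+1) t, Finset.prod_range_succ]
  have hDm2 : D (m+2) t = Q * h m t * h (m+1) t := by
    rw [hDval (m+2) t, Finset.prod_range_succ, Finset.prod_range_succ]
  have hDm0 : D m t = Q := hDval m t
  have hbval : b (m+1) t = h (m+1) t / h m t := by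
    rw [hb (m+1) t (by omega)]
    norm_num
  constructor
  · rw [hsecond, hbval, hΔval t, hKval t, hDm1, ← hA, ← hQ]
    have hm0 := ne_of_gt (hpos m t)
    have hm1 := ne_of_gt (hpos (m+1) t)
    have hQ0 := ne_of_gt hQpos
    field_simp
    ring
  · rw [hbval]
    have hn1 : m + 1 + 1 = m + 2 := rfl
    have hn0 : m + 1 - 1 = m := rfl
    rw [hn1, hn0, hDm2, hDm0, hDm1]
    have hm0 := ne_of_gt (hpos m t)
    have hQ0 := ne_of_gt hQpos
    field_simp
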